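/- If k is even, then for all integers q and r: x_{k,q,r} = x_{k−1,q+1,r+1}. -/
import Mathlib


/-- A quandle as in the paper: a set with operations `▷` and `▷⁻¹` satisfying
axioms A1, A2, A3. -/
class PaperQuandle (Q : Type*) where
  rhd : Q → Q → Q
  rhdInv : Q → Q → Q
  fix : ∀ x : Q, rhd x x = x
  inv_rhd : ∀ x y : Q, rhdInv (rhd x y) y = x
  rhd_inv : ∀ x y : Q, rhd (rhdInv x y) y = x
  self_distrib : ∀ x y z : Q, rhd (rhd x y) z = rhd (rhd x z) (rhd y z)

infixl:65 " ▷ " => PaperQuandle.rhd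
infixl:65 " ▷⁻¹ " => PaperQuandle.rhdInv

/-- The point symmetry at `u`, as a permutation of `Q`: `x ↦ x ▷ u`,
with inverse `x ↦ x ▷⁻¹ u`. -/
def ptSym {Q : Type*} [PaperQuandle Q] (u : Q) : Equiv.Perm Q where
  toFun x := x ▷ u
  invFun x := x ▷⁻¹ u
  left_inv x := PaperQuandle.inv_rhd x u
  right_inv x := PaperQuandle.rhd_inv x u

/-- The element `x_{p,q,r} = a^{(ba)^t c^q d^r}` if `p = 2t`, and
`a^{(ba)^t b c^q d^r}` if `p = 2t+1`.  Here the word `ba` (apply `b`, then `a`)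
is the permutation `ptSym a * ptSym b`. -/
def X {Q : Type*} [PaperQuandle Q] (a b c d : Q) (p q r : ℤ) : Q :=
  if Even p then
    (ptSym d ^ r) ((ptSym c ^ q) (((ptSym a * ptSym b) ^ (p / 2)) a))
  else
    (ptSym d ^ r) ((ptSym c ^ q) ((((ptSym a * ptSym b) ^ ((p - 1) / 2)) a) ▷ b))

private lemma quandle_grp_aux {G : Type*} [Group G] (A B C D E F : G) (t q r : ℤ)
    (hAA : A * A = 1) (hBB : B * B = 1) (hEE : E * E = 1) (hFF : F * F = 1)
    (hAED : A * E * D = 1) (hFDB : F * D * B = 1)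
    (hEAMC : E * A * (B * A) ^ (t + t) * C = 1) :
    D ^ (r + 1) * C ^ (q + 1) * B * (A * B) ^ (t - 1)
      = D ^ r * C ^ q * (A * B) ^ t * A := by
  have hA' : A⁻¹ = A := inv_eq_of_mul_eq_one_right hAA
  have hB' : B⁻¹ = B := inv_eq_of_mul_eq_one_right hBB
  set M : G := B * A with hM
  have hN : A * B = M⁻¹ := by rw [hM, mul_inv_rev, hA', hB']
  -- E = A * D⁻¹
  have hE1 : E = A * D⁻¹ := by
    have h : A * E = D⁻¹ := mul_eq_one_iff_eq_inv.mp hAED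
    calc E = A * (A * E) := by rw [← mul_assoc, hAA, one_mul]
    _ = A * D⁻¹ := by rw [h]
  have hADA : A * D⁻¹ * A = D := by
    have h : A * D⁻¹ * (A * D⁻¹) = 1 := by rw [← hE1]; exact hEE
    have h2 : A * D⁻¹ * A * D⁻¹ = 1 := by rw [← mul_assoc] at h; exact h
    have h3 := mul_eq_one_iff_eq_inv.mp h2
    simpa using h3
  have hF1 : F = B * D⁻¹ := by
    have h : F * D = B⁻¹ := mul_eq_one_iff_eq_inv.mp hFDB
    calc F = F * D * D⁻¹ := by rw [mul_assoc, mul_inv_cancel, mul_one]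
    _ = B * D⁻¹ := by rw [h, hB']
  have hBDB : B * D⁻¹ * B = D := by
    have h : B * D⁻¹ * (B * D⁻¹) = 1 := by rw [← hF1]; exact hFF
    have h2 : B * D⁻¹ * B * D⁻¹ = 1 := by rw [← mul_assoc] at h; exact h
    have h3 := mul_eq_one_iff_eq_inv.mp h2
    simpa using h3
  -- D commutes with M
  have hAD2 : D⁻¹ * A = A * D := by
    have h : A * (D⁻¹ * A) = D := by rw [← mul_assoc]; exact hADA
    calc D⁻¹ * A = A * (A * (D⁻¹ * A)) := by rw [← mul_assoc, ← mul_assoc, hAA, one_mul]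
    _ = A * D := by rw [h]
  have hBD : D * B = B * D⁻¹ := by
    have h := hBDB
    calc D * B = B * D⁻¹ * B * B := by rw [h]
    _ = B * D⁻¹ := by rw [mul_assoc, hBB, mul_one]
  have hMD : Commute D M := by
    show D * M = M * D
    calc D * (B * A) = (D * B) * A := by rw [mul_assoc]
    _ = B * (D⁻¹ * A) := by rw [hBD, mul_assoc]
    _ = B * (A * D) := by rw [hAD2]
    _ = (B * A) * D := by rw [mul_assoc]
  -- D * M^(t+t) * C = 1
  have hEA : E * A = D := by rw [hE1]; exact hADA
  have hDMC : D * M ^ (t + t) * C = 1 := by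
    have h := hEAMC
    rw [show E * A * (B * A) ^ (t + t) * C = (E * A) * ((B * A) ^ (t + t) * C) by
      rw [mul_assoc, mul_assoc]] at h
    rw [hEA] at h
    rw [mul_assoc]; exact h
  have hC : C = (M ^ (t + t))⁻¹ * D⁻¹ := by
    have h : (D * M ^ (t + t))⁻¹ = C := by
      have := hDMC
      rw [mul_eq_one_iff_inv_eq] at this
      exact this
    rw [← h, mul_inv_rev]
  -- commutation of C with D
  have hCD : Commute C D := by
    rw [hC]
    exact Commute.mul_left ((hMD.zpow_right (t + t)).symm.inv_left) (Commute.refl D).inv_left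
  -- B * M^j = M^(-j) * B
  have hBM : SemiconjBy B M M⁻¹ := by
    show B * M = M⁻¹ * B
    rw [hM, ← hN]
    calc B * (B * A) = (B * B) * A := by rw [mul_assoc]
    _ = A := by rw [hBB, one_mul]
    _ = A * (B * B) := by rw [hBB, mul_one]
    _ = (A * B) * B := by rw [mul_assoc]
  have hBMj : ∀ j : ℤ, B * M ^ j = M ^ (-j) * B := by
    intro j
    have := hBM.zpow_right j
    rw [inv_zpow, ← zpow_neg] at this
    exact this
  -- reduce : cancel D^r * C^q
  have hDC : D * C = (M ^ (t + t))⁻¹ := by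
    rw [hC, ← mul_assoc]
    rw [(hMD.zpow_right (t + t)).inv_right.eq, mul_assoc, mul_inv_cancel, mul_one]
  have key : D * C * B * (A * B) ^ (t - 1) = (A * B) ^ t * A := by
    rw [hN, inv_zpow, ← zpow_neg, inv_zpow, ← zpow_neg, hDC]
    rw [mul_assoc, hBMj (-(t - 1)), neg_neg, ← mul_assoc]
    rw [← zpow_neg, ← zpow_add]
    have hexp : -(t + t) + (t - 1) = -t + -1 := by ring
    rw [hexp, zpow_add, zpow_neg_one, mul_assoc]
    congr 1
    -- M⁻¹ * B = A
    rw [← hN, mul_assoc, hBB, mul_one]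
  have hstep : D ^ (r + 1) * C ^ (q + 1) = D ^ r * C ^ q * (D * C) := by
    rw [zpow_add_one, zpow_add_one]
    have h1 : D * C ^ q = C ^ q * D := (hCD.symm.zpow_right q).eq
    calc D ^ r * D * (C ^ q * C) = D ^ r * (D * C ^ q) * C := by simp only [mul_assoc]
    _ = D ^ r * (C ^ q * D) * C := by rw [h1]
    _ = D ^ r * C ^ q * (D * C) := by simp only [mul_assoc]
  calc D ^ (r + 1) * C ^ (q + 1) * B * (A * B) ^ (t - 1)
      = D ^ r * C ^ q * (D * C) * B * (A * B) ^ (t - 1) := by rw [hstep]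
  _ = D ^ r * C ^ q * (D * C * B * (A * B) ^ (t - 1)) := by simp only [mul_assoc]
  _ = D ^ r * C ^ q * ((A * B) ^ t * A) := by rw [key]
  _ = D ^ r * C ^ q * (A * B) ^ t * A := by simp only [mul_assoc]

theorem stmt_10
    {Q : Type*} [PaperQuandle Q] (k : ℤ) (m n : ℕ) (a b c d e f : Q)
    (hk : 1 ≤ k) (hm : 0 < m) (hn : 0 < n)
    (rel_a : ∀ x : Q, x ▷ a ▷ a = x)
    (rel_b : ∀ x : Q, x ▷ b ▷ b = x)
    (rel_e : ∀ x : Q, x ▷ e ▷ e = x)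
    (rel_f : ∀ x : Q, x ▷ f ▷ f = x)
    (rel_c : ∀ x : Q, (ptSym c ^ m) x = x)
    (rel_d : ∀ x : Q, (ptSym d ^ n) x = x)
    (rel_dea : ∀ x : Q, x ▷ d ▷ e ▷ a = x)
    (rel_bdf : ∀ x : Q, x ▷ b ▷ d ▷ f = x)
    (rel_cke : ∀ x : Q, (((ptSym b * ptSym a) ^ k) (x ▷ c)) ▷ a ▷ e = x)
    (rel_fca : ∀ x : Q, (((ptSym b * ptSym a) ^ (k - 1)) (x ▷ f ▷ c)) ▷ a = x)
    (hke : Even k) :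
    ∀ q r : ℤ, X a b c d k q r = X a b c d (k - 1) (q + 1) (r + 1) := by
  intro q r
  obtain ⟨t, ht⟩ := hke
  have hodd : ¬ Even (k - 1) := by
    rintro ⟨s, hs⟩; omega
  have hd1 : k / 2 = t := by omega
  have hd2 : (k - 1 - 1) / 2 = t - 1 := by omega
  have hAA : ptSym a * ptSym a = 1 := Equiv.ext fun x => rel_a x
  have hBB : ptSym b * ptSym b = 1 := Equiv.ext fun x => rel_b x
  have hEE : ptSym e * ptSym e = 1 := Equiv.ext fun x => rel_e x
  have hFF : ptSym f * ptSym f = 1 := Equiv.ext fun x => rel_f x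
  have hAED : ptSym a * ptSym e * ptSym d = 1 := Equiv.ext fun x => rel_dea x
  have hFDB : ptSym f * ptSym d * ptSym b = 1 := Equiv.ext fun x => rel_bdf x
  have hEAMC : ptSym e * ptSym a * (ptSym b * ptSym a) ^ (t + t) * ptSym c = 1 := by
    rw [← ht]
    exact Equiv.ext fun x => rel_cke x
  have Egrp := quandle_grp_aux (ptSym a) (ptSym b) (ptSym c) (ptSym d) (ptSym e)
    (ptSym f) t q r hAA hBB hEE hFF hAED hFDB hEAMC
  have Ept := congrArg (fun π : Equiv.Perm Q => π a) Egrp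
  simp only [Equiv.Perm.mul_apply] at Ept
  simp only [X]
  rw [if_pos (show Even k from ⟨t, ht⟩), if_neg hodd, hd1, hd2]
  have hfix : ptSym a a = a := PaperQuandle.fix a
  rw [hfix] at Ept
  exact Ept.symm
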